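/- For every n ≥ 1 and all symmetric functions f, g, we have f · h_n^⊥(g) = Σ_{k=0}^{n} (−1)^k h_{n−k}^⊥(e_k^⊥(f) · g) in the ring of symmetric functions. -/

import Mathlib

open scoped Classical

noncomputable section

/-- The ring of symmetric functions over `ℚ`, presented as the polynomial ring
`ℚ[p_1, p_2, …]` in the power-sum generators: variable `n` stands for the
power sum `p_{n+1}`. -/
abbrev SymFn : Type := MvPolynomial ℕ ℚ

/-- The power-sum monomial `p_λ` corresponding to an exponent vector `d`
(`d n` copies of `p_{n+1}`). -/
def pmon (d : ℕ →₀ ℕ) : SymFn := MvPolynomial.monomial d 1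

/-- The quantity `z_λ = ∏ i^{m_i} · m_i!` for the partition `λ` with `d n`
parts equal to `n+1`. -/
def zWeight (d : ℕ →₀ ℕ) : ℚ := d.prod fun n k => ((n : ℚ) + 1) ^ k * (Nat.factorial k)

/-- The degree `|λ|` of the partition encoded by `d`. -/
def wdeg (d : ℕ →₀ ℕ) : ℕ := d.sum fun n k => (n + 1) * k

/-- The length `ℓ(λ)` of the partition encoded by `d`. -/
def plen (d : ℕ →₀ ℕ) : ℕ := d.sum fun _ k => k

/-- The Hall inner product on `Λ`, determined by `⟨p_λ, p_μ⟩ = δ_{λμ} z_λ`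
(equivalently, the one making the Schur functions orthonormal). -/
def hall (f g : SymFn) : ℚ :=
  ∑ d ∈ f.support, MvPolynomial.coeff d f * MvPolynomial.coeff d g * zWeight d

/-- `perp f g = f^⊥(g)`, the adjoint of multiplication by `f` with respect to
the Hall inner product, applied to `g`; it is characterized by expanding in the
orthogonal basis `p_λ`:  `f^⊥(g) = Σ_λ z_λ^{-1} ⟨f·p_λ, g⟩ p_λ`. -/
def perp (f g : SymFn) : SymFn :=
  ∑ᶠ d : ℕ →₀ ℕ, (hall (f * pmon d) g / zWeight d) • pmon d

/-- The complete homogeneous symmetric function `h_n = Σ_{λ ⊢ n} z_λ^{-1} p_λ`. -/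
def hΛ (n : ℕ) : SymFn :=
  ∑ᶠ (d : ℕ →₀ ℕ) (_ : wdeg d = n), (zWeight d)⁻¹ • pmon d

/-- The elementary symmetric function
`e_n = Σ_{λ ⊢ n} (−1)^{n − ℓ(λ)} z_λ^{-1} p_λ`. -/
def eΛ (n : ℕ) : SymFn :=
  ∑ᶠ (d : ℕ →₀ ℕ) (_ : wdeg d = n), ((-1 : ℚ) ^ (n - plen d) * (zWeight d)⁻¹) • pmon d

/-- A partition, given by its weakly decreasing, eventually zero sequence of
parts. -/
def IsPartition (p : ℕ → ℕ) : Prop := Antitone p ∧ ∃ N, ∀ i, N ≤ i → p i = 0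

/-- The empty partition. -/
def emptyShape : ℕ → ℕ := fun _ => 0

/-- Containment of partitions. -/
def SubShape (m l : ℕ → ℕ) : Prop := ∀ i, m i ≤ l i

/-- The skew Schur function `s_{λ/μ}` in `Λ`, via the Jacobi–Trudi determinant
`s_{λ/μ} = det(h_{λ_i − μ_j − i + j})_{0 ≤ i,j < N}`, where `N` is at least the
number of parts of `λ` and `h_k = 0` for `k < 0`. -/
def schurJT (l m : ℕ → ℕ) (N : ℕ) : SymFn :=
  Matrix.det (Matrix.of fun i j : Fin N =>
    if l i + (j : ℕ) < m j + (i : ℕ) then 0 else hΛ (l i + (j : ℕ) - (m j + (i : ℕ))))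

end

noncomputable section Aux
open MvPolynomial Finset Finsupp

lemma zW_pos (d : ℕ →₀ ℕ) : 0 < zWeight d := by
  unfold zWeight Finsupp.prod
  apply Finset.prod_pos
  intro i _
  positivity

lemma zW_ne (d : ℕ →₀ ℕ) : zWeight d ≠ 0 := (zW_pos d).ne'

lemma pmon_mul (a b : ℕ →₀ ℕ) : pmon a * pmon b = pmon (a + b) := by
  simp [pmon, monomial_mul]

lemma pmon_zero : pmon 0 = 1 := by simp [pmon]

lemma coeff_pmon (e d : ℕ →₀ ℕ) : MvPolynomial.coeff e (pmon d) = if d = e then 1 else 0 := by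
  simp [pmon, coeff_monomial]

lemma X_mul_pmon (m : ℕ) (d : ℕ →₀ ℕ) :
    (X m : SymFn) * pmon d = pmon (d + Finsupp.single m 1) := by
  rw [X, pmon, pmon, monomial_mul, one_mul, add_comm]

lemma zW_eq_prod (d : ℕ →₀ ℕ) {s : Finset ℕ} (h : d.support ⊆ s) :
    zWeight d = ∏ i ∈ s, ((i : ℚ) + 1) ^ (d i) * (Nat.factorial (d i)) := by
  exact Finsupp.prod_of_support_subset d h _ (fun i _ => by simp)

lemma zW_add_single (d : ℕ →₀ ℕ) (m : ℕ) :
    zWeight (d + Finsupp.single m 1) = zWeight d * (((m : ℚ) + 1) * ((d m : ℚ) + 1)) := by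
  set s : Finset ℕ := insert m d.support with hs
  have h1 : d.support ⊆ s := Finset.subset_insert _ _
  have h2 : (d + Finsupp.single m 1).support ⊆ s := by
    intro i hi
    rcases Finset.mem_union.1 (Finsupp.support_add hi) with h | h
    · exact Finset.mem_insert_of_mem h
    · have := Finsupp.support_single_subset h
      simp only [Finset.mem_singleton] at this
      rw [this]
      exact Finset.mem_insert_self _ _
  rw [zW_eq_prod d h1, zW_eq_prod _ h2]
  have hm : m ∈ s := Finset.mem_insert_self _ _
  rw [← Finset.mul_prod_erase s _ hm, ← Finset.mul_prod_erase s
    (fun i => ((i : ℚ) + 1) ^ (d i) * (Nat.factorial (d i))) hm]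
  have hrest : ∀ i ∈ s.erase m,
      ((i : ℚ) + 1) ^ (((d + Finsupp.single m 1) : ℕ →₀ ℕ) i) *
        (Nat.factorial (((d + Finsupp.single m 1) : ℕ →₀ ℕ) i))
      = ((i : ℚ) + 1) ^ (d i) * (Nat.factorial (d i)) := by
    intro i hi
    have hne : i ≠ m := Finset.ne_of_mem_erase hi
    rw [Finsupp.add_apply, Finsupp.single_apply, if_neg (Ne.symm hne), add_zero]
  rw [Finset.prod_congr rfl hrest]
  have : ((d + Finsupp.single m 1 : ℕ →₀ ℕ)) m = d m + 1 := by simp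
  rw [this, pow_succ, Nat.factorial_succ]
  push_cast
  ring

lemma wdeg_add (a b : ℕ →₀ ℕ) : wdeg (a + b) = wdeg a + wdeg b := by
  unfold wdeg
  exact Finsupp.sum_add_index' (fun _ => by simp) (fun i x y => by ring)

lemma plen_add (a b : ℕ →₀ ℕ) : plen (a + b) = plen a + plen b := by
  unfold plen
  exact Finsupp.sum_add_index' (fun _ => rfl) (fun i x y => rfl)

lemma wdeg_single (m k : ℕ) : wdeg (Finsupp.single m k) = (m + 1) * k := by
  unfold wdeg
  exact Finsupp.sum_single_index (by simp)

lemma plen_single (m k : ℕ) : plen (Finsupp.single m k) = k := by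
  unfold plen
  exact Finsupp.sum_single_index rfl

lemma plen_le_wdeg (d : ℕ →₀ ℕ) : plen d ≤ wdeg d := by
  unfold plen wdeg Finsupp.sum
  exact Finset.sum_le_sum (fun i _ => Nat.le_mul_of_pos_left _ (Nat.succ_pos i))

lemma term_le_wdeg (d : ℕ →₀ ℕ) (m : ℕ) : (m + 1) * d m ≤ wdeg d := by
  by_cases hm : m ∈ d.support
  · unfold wdeg Finsupp.sum
    exact Finset.single_le_sum (f := fun a => (a + 1) * d a) (fun i _ => Nat.zero_le _) hm
  · have : d m = 0 := Finsupp.notMem_support_iff.1 hm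
    simp [this]

lemma wdeg_eq_zero (d : ℕ →₀ ℕ) (h : wdeg d = 0) : d = 0 := by
  ext m
  have := term_le_wdeg d m
  rw [h] at this
  have h2 : (m + 1) * d m = 0 := Nat.le_zero.mp this
  simp only [Finsupp.coe_zero, Pi.zero_apply]
  rcases Nat.mul_eq_zero.mp h2 with h3 | h3 <;> omega

lemma zW_zero : zWeight 0 = 1 := by simp [zWeight]

lemma plen_zero : plen 0 = 0 := by simp [plen]

lemma wdeg_zero : wdeg 0 = 0 := by simp [wdeg]

-- ## Hall pairing lemmas

lemma hall_eq_sum {f : SymFn} (g : SymFn) {s : Finset (ℕ →₀ ℕ)} (h : f.support ⊆ s) :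
    hall f g = ∑ d ∈ s, MvPolynomial.coeff d f * MvPolynomial.coeff d g * zWeight d := by
  unfold hall
  apply Finset.sum_subset h
  intro x _ hx
  rw [MvPolynomial.notMem_support_iff.1 hx]
  ring

lemma hall_comm (f g : SymFn) : hall f g = hall g f := by
  rw [hall_eq_sum g (s := f.support ∪ g.support) Finset.subset_union_left,
    hall_eq_sum f (s := f.support ∪ g.support) Finset.subset_union_right]
  exact Finset.sum_congr rfl (fun d _ => by ring)

lemma hall_add_left (f₁ f₂ g : SymFn) : hall (f₁ + f₂) g = hall f₁ g + hall f₂ g := by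
  set s := (f₁.support ∪ f₂.support) ∪ (f₁ + f₂).support with hs
  rw [hall_eq_sum g (f := f₁ + f₂) (s := s) Finset.subset_union_right,
    hall_eq_sum g (f := f₁) (s := s)
      (Finset.Subset.trans Finset.subset_union_left Finset.subset_union_left),
    hall_eq_sum g (f := f₂) (s := s)
      (Finset.Subset.trans Finset.subset_union_right Finset.subset_union_left),
    ← Finset.sum_add_distrib]
  exact Finset.sum_congr rfl (fun d _ => by rw [MvPolynomial.coeff_add]; ring)

lemma hall_smul_left (a : ℚ) (f g : SymFn) : hall (a • f) g = a * hall f g := by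
  have hsub : (a • f).support ⊆ f.support := by
    intro x hx
    rw [MvPolynomial.mem_support_iff] at hx ⊢
    intro hc
    exact hx (by rw [MvPolynomial.coeff_smul, hc, smul_zero])
  rw [hall_eq_sum g (f := a • f) hsub,
    hall_eq_sum g (f := f) (s := f.support) (le_refl _), Finset.mul_sum]
  exact Finset.sum_congr rfl (fun d _ => by
    rw [MvPolynomial.coeff_smul, smul_eq_mul]; ring)

lemma hall_zero_left (g : SymFn) : hall 0 g = 0 := by simp [hall]

lemma hall_sum_left {ι : Type*} (s : Finset ι) (F : ι → SymFn) (g : SymFn) :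
    hall (∑ i ∈ s, F i) g = ∑ i ∈ s, hall (F i) g := by
  induction s using Finset.induction_on with
  | empty => simp [hall_zero_left]
  | insert _ _ h ih => rw [Finset.sum_insert h, Finset.sum_insert h, hall_add_left, ih]

lemma hall_pmon_left (a : ℕ →₀ ℕ) (g : SymFn) :
    hall (pmon a) g = MvPolynomial.coeff a g * zWeight a := by
  have h : (pmon a).support ⊆ {a} := by
    rw [pmon]; exact MvPolynomial.support_monomial_subset
  rw [hall_eq_sum g h, Finset.sum_singleton, coeff_pmon, if_pos rfl, one_mul]

lemma hall_pmon_right (f : SymFn) (a : ℕ →₀ ℕ) :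
    hall f (pmon a) = MvPolynomial.coeff a f * zWeight a := by
  rw [hall_comm, hall_pmon_left]

-- ## perp basics

/-- The finite carrier for the support of the `perp` finsum. -/
def pset (f g : SymFn) : Finset (ℕ →₀ ℕ) :=
  Finset.image (fun p : (ℕ →₀ ℕ) × (ℕ →₀ ℕ) => p.2 - p.1) (f.support ×ˢ g.support)

lemma hall_mul_pmon_ne {f g : SymFn} {d : ℕ →₀ ℕ} (h : hall (f * pmon d) g ≠ 0) :
    d ∈ pset f g := by
  unfold hall at h
  obtain ⟨e, he, hne⟩ := Finset.exists_ne_zero_of_sum_ne_zero h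
  have h1 : MvPolynomial.coeff e (f * pmon d) ≠ 0 := fun hc => hne (by simp [hc])
  have h2 : MvPolynomial.coeff e g ≠ 0 := fun hc => hne (by simp [hc])
  rw [pmon, MvPolynomial.coeff_mul_monomial'] at h1
  by_cases hle : d ≤ e
  · rw [if_pos hle] at h1
    refine Finset.mem_image.2 ⟨(e - d, e), ?_, ?_⟩
    · simp only [Finset.mem_product, MvPolynomial.mem_support_iff]
      exact ⟨fun hc => h1 (by simp [hc]), h2⟩
    · simp only
      exact tsub_tsub_cancel_of_le hle
  · rw [if_neg hle] at h1
    exact absurd rfl h1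

lemma perp_eq_sum (f g : SymFn) :
    perp f g = ∑ d ∈ pset f g, (hall (f * pmon d) g / zWeight d) • pmon d := by
  unfold perp
  apply finsum_eq_sum_of_support_subset
  intro d hd
  simp only [Function.mem_support] at hd
  have : hall (f * pmon d) g ≠ 0 := by
    intro hc
    apply hd
    rw [hc, zero_div, zero_smul]
  exact hall_mul_pmon_ne this

lemma coeff_perp (f g : SymFn) (e : ℕ →₀ ℕ) :
    MvPolynomial.coeff e (perp f g) = hall (f * pmon e) g / zWeight e := by
  rw [perp_eq_sum]
  rw [MvPolynomial.coeff_sum]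
  have hterm : ∀ d, MvPolynomial.coeff e ((hall (f * pmon d) g / zWeight d) • pmon d)
      = if d = e then hall (f * pmon d) g / zWeight d else 0 := by
    intro d
    rw [MvPolynomial.coeff_smul, coeff_pmon]
    split_ifs <;> simp
  rw [Finset.sum_congr rfl (fun d _ => hterm d)]
  rw [Finset.sum_ite_eq' (pset f g) e]
  split_ifs with h
  · rfl
  · by_cases hz : hall (f * pmon e) g = 0
    · rw [hz, zero_div]
    · exact absurd (hall_mul_pmon_ne hz) h

lemma hall_perp_pmon (f g : SymFn) (e : ℕ →₀ ℕ) :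
    hall (perp f g) (pmon e) = hall (f * pmon e) g := by
  rw [hall_pmon_right, coeff_perp, div_mul_cancel₀ _ (zW_ne e)]

lemma as_sum_smul (u : SymFn) : u = ∑ d ∈ u.support, MvPolynomial.coeff d u • pmon d := by
  conv_lhs => rw [MvPolynomial.as_sum u]
  exact Finset.sum_congr rfl (fun d _ => by
    rw [pmon, MvPolynomial.smul_monomial, smul_eq_mul, mul_one])

lemma hall_right_perp (u f g : SymFn) : hall u (perp f g) = hall (f * u) g := by
  conv_lhs => rw [as_sum_smul u]
  conv_rhs => rw [as_sum_smul u]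
  rw [Finset.mul_sum, hall_sum_left, hall_sum_left]
  refine Finset.sum_congr rfl (fun d _ => ?_)
  rw [hall_smul_left, mul_smul_comm, hall_smul_left]
  congr 1
  rw [hall_comm, hall_perp_pmon]

lemma ext_hall {u v : SymFn} (h : ∀ e, hall u (pmon e) = hall v (pmon e)) : u = v := by
  apply MvPolynomial.ext
  intro e
  have := h e
  rw [hall_pmon_right, hall_pmon_right] at this
  exact mul_right_cancel₀ (zW_ne e) this

-- ## perp linearity and multiplicativity

lemma perp_ext {f g f' g' : SymFn}
    (h : ∀ e, hall (f * pmon e) g = hall (f' * pmon e) g') : perp f g = perp f' g' := by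
  apply MvPolynomial.ext
  intro e
  rw [coeff_perp, coeff_perp, h e]

lemma perp_add_left (f₁ f₂ g : SymFn) : perp (f₁ + f₂) g = perp f₁ g + perp f₂ g := by
  apply MvPolynomial.ext
  intro e
  rw [MvPolynomial.coeff_add, coeff_perp, coeff_perp, coeff_perp, add_mul, hall_add_left,
    add_div]

lemma perp_smul_left (a : ℚ) (f g : SymFn) : perp (a • f) g = a • perp f g := by
  apply MvPolynomial.ext
  intro e
  rw [MvPolynomial.coeff_smul, coeff_perp, coeff_perp, smul_mul_assoc, hall_smul_left,
    mul_div_assoc, smul_eq_mul]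

lemma perp_zero_left (g : SymFn) : perp 0 g = 0 := by
  apply MvPolynomial.ext
  intro e
  rw [coeff_perp, zero_mul, hall_zero_left, zero_div, MvPolynomial.coeff_zero]

lemma perp_sum_left {ι : Type*} (s : Finset ι) (F : ι → SymFn) (g : SymFn) :
    perp (∑ i ∈ s, F i) g = ∑ i ∈ s, perp (F i) g := by
  induction s using Finset.induction_on with
  | empty => simp [perp_zero_left]
  | insert _ _ h ih => rw [Finset.sum_insert h, Finset.sum_insert h, perp_add_left, ih]

lemma hall_add_right (f g₁ g₂ : SymFn) : hall f (g₁ + g₂) = hall f g₁ + hall f g₂ := by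
  rw [hall_comm, hall_add_left, hall_comm g₁, hall_comm g₂]

lemma hall_smul_right (a : ℚ) (f g : SymFn) : hall f (a • g) = a * hall f g := by
  rw [hall_comm, hall_smul_left, hall_comm]

lemma perp_add_right (f g₁ g₂ : SymFn) : perp f (g₁ + g₂) = perp f g₁ + perp f g₂ := by
  apply MvPolynomial.ext
  intro e
  rw [MvPolynomial.coeff_add, coeff_perp, coeff_perp, coeff_perp, hall_add_right, add_div]

lemma perp_smul_right (a : ℚ) (f g : SymFn) : perp f (a • g) = a • perp f g := by
  apply MvPolynomial.ext
  intro e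
  rw [MvPolynomial.coeff_smul, coeff_perp, coeff_perp, hall_smul_right, smul_eq_mul,
    mul_div_assoc]

lemma perp_sum_right {ι : Type*} (s : Finset ι) (f : SymFn) (G : ι → SymFn) :
    perp f (∑ i ∈ s, G i) = ∑ i ∈ s, perp f (G i) := by
  induction s using Finset.induction_on with
  | empty =>
    simp only [Finset.sum_empty]
    apply MvPolynomial.ext
    intro e
    rw [coeff_perp, MvPolynomial.coeff_zero]
    have : hall (f * pmon e) 0 = 0 := by rw [hall_comm, hall_zero_left]
    rw [this, zero_div]
  | insert _ _ h ih => rw [Finset.sum_insert h, Finset.sum_insert h, perp_add_right, ih]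

lemma perp_one (g : SymFn) : perp 1 g = g := by
  apply MvPolynomial.ext
  intro e
  rw [coeff_perp, one_mul, hall_pmon_left, mul_div_cancel_right₀ _ (zW_ne e)]

lemma perp_mul (f₁ f₂ g : SymFn) : perp (f₁ * f₂) g = perp f₁ (perp f₂ g) := by
  apply MvPolynomial.ext
  intro e
  rw [coeff_perp, coeff_perp, hall_right_perp]
  congr 2
  ring

-- ## perp X is a derivation

lemma coeff_pderiv (m : ℕ) (p : SymFn) (e : ℕ →₀ ℕ) :
    MvPolynomial.coeff e (MvPolynomial.pderiv m p)
      = ((e m : ℚ) + 1) * MvPolynomial.coeff (e + Finsupp.single m 1) p := by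
  induction p using MvPolynomial.induction_on' with
  | monomial s a =>
    rw [MvPolynomial.pderiv_monomial, MvPolynomial.coeff_monomial, MvPolynomial.coeff_monomial]
    by_cases h : s = e + Finsupp.single m 1
    · subst h
      rw [if_pos, if_pos rfl]
      · have hm : (e + Finsupp.single m 1 : ℕ →₀ ℕ) m = e m + 1 := by simp
        rw [hm]
        push_cast
        ring
      · simp
    · rw [if_neg h]
      by_cases h2 : s - Finsupp.single m 1 = e
      · rw [if_pos h2]
        have hsm : s m = 0 := by
          by_contra hsm
          apply h
          rw [← h2]
          ext i
          rcases eq_or_ne i m with rfl | hne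
          · simp only [Finsupp.coe_add, Finsupp.coe_tsub, Pi.add_apply, Pi.sub_apply,
              Finsupp.single_apply, if_pos rfl, if_true]
            omega
          · simp [Finsupp.tsub_apply, Finsupp.add_apply, Finsupp.single_apply, Ne.symm hne, hne]
        rw [hsm]
        push_cast
        ring
      · rw [if_neg h2, mul_zero]
  | add p q hp hq =>
    rw [map_add, MvPolynomial.coeff_add, MvPolynomial.coeff_add, hp, hq]
    ring

lemma perp_X (m : ℕ) (g : SymFn) :
    perp (X m) g = ((m : ℚ) + 1) • MvPolynomial.pderiv m g := by
  apply MvPolynomial.ext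
  intro e
  rw [coeff_perp, X_mul_pmon, hall_pmon_left, MvPolynomial.coeff_smul, coeff_pderiv,
    zW_add_single]
  rw [smul_eq_mul, div_eq_iff (zW_ne e)]
  ring

lemma perp_X_mul (m : ℕ) (f g : SymFn) :
    perp (X m) (f * g) = perp (X m) f * g + f * perp (X m) g := by
  rw [perp_X, perp_X, perp_X, MvPolynomial.pderiv_mul, smul_add, smul_mul_assoc,
    mul_smul_comm]

-- ## hΛ and eΛ as finite sums

def bnd (n : ℕ) : ℕ →₀ ℕ := ∑ m ∈ Finset.range n, Finsupp.single m n

lemma bnd_apply (n m : ℕ) : bnd n m = if m < n then n else 0 := by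
  unfold bnd
  rw [Finset.sum_apply']
  rw [Finset.sum_congr rfl (fun i _ => Finsupp.single_apply)]
  rw [Finset.sum_ite_eq' (Finset.range n) m]
  simp

lemma le_bnd {d : ℕ →₀ ℕ} {n : ℕ} (h : wdeg d = n) : d ≤ bnd n := by
  intro m
  have ht := term_le_wdeg d m
  rw [h] at ht
  rw [bnd_apply]
  by_cases hm : m < n
  · rw [if_pos hm]
    calc d m ≤ (m + 1) * d m := Nat.le_mul_of_pos_left _ (Nat.succ_pos m)
    _ ≤ n := ht
  · rw [if_neg hm]
    by_contra h0
    have h1 : m + 1 ≤ (m + 1) * d m := Nat.le_mul_of_pos_right _ (by omega)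
    omega

def Pn (n : ℕ) : Finset (ℕ →₀ ℕ) := (Finset.Iic (bnd n)).filter (fun d => wdeg d = n)

lemma mem_Pn {d : ℕ →₀ ℕ} {n : ℕ} : d ∈ Pn n ↔ wdeg d = n := by
  unfold Pn
  simp only [Finset.mem_filter, Finset.mem_Iic]
  exact ⟨fun h => h.2, fun h => ⟨le_bnd h, h⟩⟩

lemma hΛ_eq (n : ℕ) : hΛ n = ∑ d ∈ Pn n, (zWeight d)⁻¹ • pmon d := by
  exact finsum_cond_eq_sum_of_cond_iff _ (fun {d} _ => mem_Pn.symm)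

lemma eΛ_eq (n : ℕ) :
    eΛ n = ∑ d ∈ Pn n, ((-1 : ℚ) ^ (n - plen d) * (zWeight d)⁻¹) • pmon d := by
  exact finsum_cond_eq_sum_of_cond_iff _ (fun {d} _ => mem_Pn.symm)

lemma coeff_smul_pmon (q : ℚ) (d c : ℕ →₀ ℕ) :
    MvPolynomial.coeff c (q • pmon d) = if d = c then q else 0 := by
  rw [MvPolynomial.coeff_smul, coeff_pmon]
  split_ifs <;> simp

lemma coeff_hΛ (c : ℕ →₀ ℕ) (n : ℕ) :
    MvPolynomial.coeff c (hΛ n) = if wdeg c = n then (zWeight c)⁻¹ else 0 := by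
  rw [hΛ_eq, MvPolynomial.coeff_sum,
    Finset.sum_congr rfl (fun d _ => coeff_smul_pmon _ d c), Finset.sum_ite_eq' (Pn n) c]
  simp only [mem_Pn]

lemma coeff_eΛ (c : ℕ →₀ ℕ) (n : ℕ) :
    MvPolynomial.coeff c (eΛ n)
      = if wdeg c = n then (-1 : ℚ) ^ (n - plen c) * (zWeight c)⁻¹ else 0 := by
  rw [eΛ_eq, MvPolynomial.coeff_sum,
    Finset.sum_congr rfl (fun d _ => coeff_smul_pmon _ d c), Finset.sum_ite_eq' (Pn n) c]
  simp only [mem_Pn]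

lemma hΛ_zero : hΛ 0 = 1 := by
  apply MvPolynomial.ext
  intro c
  rw [coeff_hΛ, MvPolynomial.coeff_one]
  by_cases h : c = 0
  · subst h
    rw [if_pos wdeg_zero, if_pos rfl, zW_zero, inv_one]
  · rw [if_neg (fun hw => h (wdeg_eq_zero c hw)), if_neg (fun hc => h hc.symm)]

lemma eΛ_zero : eΛ 0 = 1 := by
  apply MvPolynomial.ext
  intro c
  rw [coeff_eΛ, MvPolynomial.coeff_one]
  by_cases h : c = 0
  · subst h
    rw [if_pos wdeg_zero, if_pos rfl, zW_zero, inv_one, plen_zero]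
    norm_num
  · rw [if_neg (fun hw => h (wdeg_eq_zero c hw)), if_neg (fun hc => h hc.symm)]

-- ## Per-coordinate decrement lemmas

lemma sub_single_add {c : ℕ →₀ ℕ} {m : ℕ} (hm : c m ≠ 0) :
    (c - Finsupp.single m 1) + Finsupp.single m 1 = c :=
  tsub_add_cancel_of_le (Finsupp.single_le_iff.2 (by omega))

lemma wdeg_sub_single {c : ℕ →₀ ℕ} {m : ℕ} (hm : c m ≠ 0) :
    wdeg (c - Finsupp.single m 1) + (m + 1) = wdeg c := by
  conv_rhs => rw [← sub_single_add hm]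
  rw [wdeg_add, wdeg_single, mul_one]

lemma plen_sub_single {c : ℕ →₀ ℕ} {m : ℕ} (hm : c m ≠ 0) :
    plen (c - Finsupp.single m 1) + 1 = plen c := by
  conv_rhs => rw [← sub_single_add hm]
  rw [plen_add, plen_single]

lemma sub_single_apply (c : ℕ →₀ ℕ) (m : ℕ) :
    (c - Finsupp.single m 1 : ℕ →₀ ℕ) m = c m - 1 := by
  simp

lemma zW_sub_single_inv {c : ℕ →₀ ℕ} {m : ℕ} (hm : c m ≠ 0) :
    (zWeight (c - Finsupp.single m 1))⁻¹ = ((m : ℚ) + 1) * (c m : ℚ) * (zWeight c)⁻¹ := by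
  have h1 : zWeight c
      = zWeight (c - Finsupp.single m 1) * (((m : ℚ) + 1) * (((c - Finsupp.single m 1 : ℕ →₀ ℕ) m : ℚ) + 1)) := by
    conv_lhs => rw [← sub_single_add hm]
    exact zW_add_single _ m
  have h2 : (((c - Finsupp.single m 1 : ℕ →₀ ℕ) m : ℚ) + 1) = (c m : ℚ) := by
    rw [sub_single_apply, Nat.cast_sub (by omega)]
    ring
  rw [h2] at h1
  have hcm : (0 : ℚ) < (c m : ℚ) := by exact_mod_cast Nat.pos_of_ne_zero hm
  have hA : ((m : ℚ) + 1) * (c m : ℚ) ≠ 0 := by positivity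
  rw [h1, mul_inv, ← mul_assoc,
    mul_comm (((m : ℚ) + 1) * (c m : ℚ)) (zWeight (c - Finsupp.single m 1))⁻¹,
    mul_assoc, mul_inv_cancel₀ hA, mul_one]

lemma wdeg_cast (c : ℕ →₀ ℕ) :
    ((wdeg c : ℚ)) = ∑ m ∈ c.support, ((m : ℚ) + 1) * (c m : ℚ) := by
  unfold wdeg Finsupp.sum
  push_cast
  rfl

lemma supp_subset_range {c : ℕ →₀ ℕ} {n : ℕ} (h : wdeg c = n) :
    c.support ⊆ Finset.range n := by
  intro m hm
  have h1 : c m ≠ 0 := Finsupp.mem_support_iff.1 hm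
  have h2 : m + 1 ≤ (m + 1) * c m := Nat.le_mul_of_pos_right _ (by omega)
  have h3 := term_le_wdeg c m
  rw [Finset.mem_range]
  omega

-- ## Newton's identities

lemma newton_h (n : ℕ) :
    (n : ℚ) • hΛ n = ∑ m ∈ Finset.range n, X m * hΛ (n - 1 - m) := by
  rcases Nat.eq_zero_or_pos n with rfl | hn
  · simp
  apply MvPolynomial.ext
  intro c
  rw [MvPolynomial.coeff_smul, MvPolynomial.coeff_sum]
  have hterm : ∀ m, MvPolynomial.coeff c (X m * hΛ (n - 1 - m))
      = if m ∈ c.support then MvPolynomial.coeff (c - Finsupp.single m 1) (hΛ (n - 1 - m))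
        else 0 := fun m => MvPolynomial.coeff_X_mul' c m _
  rw [Finset.sum_congr rfl (fun m _ => hterm m)]
  by_cases hw : wdeg c = n
  · rw [coeff_hΛ, if_pos hw]
    rw [← Finset.sum_subset (supp_subset_range hw)
      (fun m _ hm => by rw [if_neg hm])]
    rw [Finset.sum_congr rfl (fun m hm => by
      have h1 : c m ≠ 0 := Finsupp.mem_support_iff.1 hm
      have h2 : m < n := Finset.mem_range.1 (supp_subset_range hw hm)
      have h3 : wdeg (c - Finsupp.single m 1) = n - 1 - m := by
        have := wdeg_sub_single h1
        omega
      rw [if_pos hm, coeff_hΛ, if_pos h3, zW_sub_single_inv h1])]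
    rw [← Finset.sum_mul, ← wdeg_cast, hw]
    rw [smul_eq_mul]
  · rw [coeff_hΛ, if_neg hw, smul_zero]
    apply (Finset.sum_eq_zero _).symm
    intro m hmr
    split_ifs with hm
    · rw [coeff_hΛ]
      rw [if_neg]
      intro h3
      apply hw
      have h1 : c m ≠ 0 := Finsupp.mem_support_iff.1 hm
      have h2 : m < n := Finset.mem_range.1 hmr
      have := wdeg_sub_single h1
      omega
    · rfl

lemma newton_e (n : ℕ) :
    (n : ℚ) • eΛ n = ∑ m ∈ Finset.range n, (-1 : ℚ) ^ m • (X m * eΛ (n - 1 - m)) := by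
  rcases Nat.eq_zero_or_pos n with rfl | hn
  · simp
  apply MvPolynomial.ext
  intro c
  rw [MvPolynomial.coeff_smul, MvPolynomial.coeff_sum]
  have hterm : ∀ m, MvPolynomial.coeff c ((-1 : ℚ) ^ m • (X m * eΛ (n - 1 - m)))
      = (-1 : ℚ) ^ m * (if m ∈ c.support then
          MvPolynomial.coeff (c - Finsupp.single m 1) (eΛ (n - 1 - m)) else 0) := by
    intro m
    rw [MvPolynomial.coeff_smul, smul_eq_mul, MvPolynomial.coeff_X_mul' c m _]
  rw [Finset.sum_congr rfl (fun m _ => hterm m)]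
  by_cases hw : wdeg c = n
  · rw [coeff_eΛ, if_pos hw]
    rw [← Finset.sum_subset (supp_subset_range hw)
      (fun m _ hm => by rw [if_neg hm, mul_zero])]
    have hterm2 : ∀ m ∈ c.support, (-1 : ℚ) ^ m *
        (if m ∈ c.support then
          MvPolynomial.coeff (c - Finsupp.single m 1) (eΛ (n - 1 - m)) else 0)
        = (-1 : ℚ) ^ (n - plen c) * (zWeight c)⁻¹ * (((m : ℚ) + 1) * (c m : ℚ)) := by
      intro m hm
      have h1 : c m ≠ 0 := Finsupp.mem_support_iff.1 hm
      have h2 : m < n := Finset.mem_range.1 (supp_subset_range hw hm)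
      have h3 : wdeg (c - Finsupp.single m 1) = n - 1 - m := by
        have := wdeg_sub_single h1
        omega
      have h4 : plen (c - Finsupp.single m 1) + 1 = plen c := plen_sub_single h1
      have h5 : plen (c - Finsupp.single m 1) ≤ n - 1 - m := h3 ▸ plen_le_wdeg _
      rw [if_pos hm, coeff_eΛ, if_pos h3, zW_sub_single_inv h1, ← mul_assoc, ← pow_add,
        show m + ((n - 1 - m) - plen (c - Finsupp.single m 1)) = n - plen c by omega]
      ring
    rw [Finset.sum_congr rfl hterm2, ← Finset.mul_sum, ← wdeg_cast, hw, smul_eq_mul]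
    ring
  · rw [coeff_eΛ, if_neg hw, smul_zero]
    apply (Finset.sum_eq_zero _).symm
    intro m hmr
    rw [coeff_eΛ]
    split_ifs with hm h3
    · exfalso
      apply hw
      have h1 : c m ≠ 0 := Finsupp.mem_support_iff.1 hm
      have h2 : m < n := Finset.mem_range.1 hmr
      have := wdeg_sub_single h1
      omega
    · rw [mul_zero]
    · rw [mul_zero]

-- ## Triangle reindexing lemmas

lemma tri {M : Type*} [AddCommMonoid M] (n : ℕ) (F : ℕ → ℕ → M) :
    ∑ m ∈ Finset.range n, ∑ j ∈ Finset.range (n - m), F m j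
      = ∑ k ∈ Finset.range (n + 1), ∑ m ∈ Finset.range k, F m (k - 1 - m) := by
  rw [Finset.sum_sigma', Finset.sum_sigma']
  refine Finset.sum_nbij' (i := fun p => ⟨p.1 + p.2 + 1, p.1⟩)
    (j := fun q => ⟨q.2, q.1 - 1 - q.2⟩) ?_ ?_ ?_ ?_ ?_
  · intro p hp
    simp only [Finset.mem_sigma, Finset.mem_range] at hp ⊢
    omega
  · intro q hq
    simp only [Finset.mem_sigma, Finset.mem_range] at hq ⊢
    omega
  · intro p hp
    obtain ⟨a, b⟩ := p
    simp only [Finset.mem_sigma, Finset.mem_range] at hp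
    dsimp only
    simp only [Sigma.ext_iff, heq_eq_eq, true_and, eq_self_iff_true, and_true]
    omega
  · intro q hq
    obtain ⟨a, b⟩ := q
    simp only [Finset.mem_sigma, Finset.mem_range] at hq
    dsimp only
    simp only [Sigma.ext_iff, heq_eq_eq, true_and, eq_self_iff_true, and_true]
    omega
  · intro p hp
    simp only [Finset.mem_sigma, Finset.mem_range] at hp
    simp only
    rw [show p.1 + p.2 + 1 - 1 - p.1 = p.2 by omega]

lemma tri2 {M : Type*} [AddCommMonoid M] (n : ℕ) (F : ℕ → ℕ → M) :
    ∑ m ∈ Finset.range n, ∑ j ∈ Finset.range (n - m), F m j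
      = ∑ j ∈ Finset.range n, ∑ m ∈ Finset.range (n - j), F m j := by
  rw [Finset.sum_sigma', Finset.sum_sigma']
  refine Finset.sum_nbij' (i := fun p => ⟨p.2, p.1⟩) (j := fun q => ⟨q.2, q.1⟩)
    ?_ ?_ ?_ ?_ ?_
  · intro p hp
    simp only [Finset.mem_sigma, Finset.mem_range] at hp ⊢
    omega
  · intro q hq
    simp only [Finset.mem_sigma, Finset.mem_range] at hq ⊢
    omega
  · intro p _
    rfl
  · intro q _
    rfl
  · intro p _
    rfl

lemma tri3 {M : Type*} [AddCommMonoid M] (n : ℕ) (F : ℕ → ℕ → M) :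
    ∑ k ∈ Finset.range (n + 1), ∑ j ∈ Finset.range (n - k + 1), F k j
      = ∑ i ∈ Finset.range (n + 1), ∑ k ∈ Finset.range (n - i + 1), F k (n - i - k) := by
  rw [Finset.sum_sigma', Finset.sum_sigma']
  refine Finset.sum_nbij' (i := fun p => ⟨n - p.1 - p.2, p.1⟩)
    (j := fun q => ⟨q.2, n - q.1 - q.2⟩) ?_ ?_ ?_ ?_ ?_
  · intro p hp
    simp only [Finset.mem_sigma, Finset.mem_range] at hp ⊢
    omega
  · intro q hq
    simp only [Finset.mem_sigma, Finset.mem_range] at hq ⊢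
    omega
  · intro p hp
    obtain ⟨a, b⟩ := p
    simp only [Finset.mem_sigma, Finset.mem_range] at hp
    dsimp only
    simp only [Sigma.ext_iff, heq_eq_eq, true_and, eq_self_iff_true, and_true]
    omega
  · intro q hq
    obtain ⟨a, b⟩ := q
    simp only [Finset.mem_sigma, Finset.mem_range] at hq
    dsimp only
    simp only [Sigma.ext_iff, heq_eq_eq, true_and, eq_self_iff_true, and_true]
    omega
  · intro p hp
    simp only [Finset.mem_sigma, Finset.mem_range] at hp
    simp only
    rw [show n - (n - p.1 - p.2) - p.1 = p.2 by omega]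

-- ## Generic coproduct lemma

lemma cop (C : ℕ → SymFn → SymFn) (sc : ℕ → ℚ)
    (h0 : ∀ x : SymFn, C 0 x = x)
    (hrec : ∀ (n : ℕ) (x : SymFn), (n : ℚ) • C n x
      = ∑ m ∈ Finset.range n, sc m • perp (X m) (C (n - 1 - m) x)) :
    ∀ n f g, C n (f * g) = ∑ k ∈ Finset.range (n + 1), C k f * C (n - k) g := by
  intro n
  induction n using Nat.strong_induction_on with
  | _ n IH =>
  intro f g
  rcases Nat.eq_zero_or_pos n with rfl | hn
  · simp [h0]
  have hne : (n : ℚ) ≠ 0 := Nat.cast_ne_zero.2 (by omega)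
  suffices key : (n : ℚ) • C n (f * g)
      = (n : ℚ) • ∑ k ∈ Finset.range (n + 1), C k f * C (n - k) g by
    have h1 := congrArg (fun y => (n : ℚ)⁻¹ • y) key
    simp only [inv_smul_smul₀ hne] at h1
    exact h1
  rw [hrec n (f * g)]
  have step1 : ∀ m ∈ Finset.range n,
      sc m • perp (X m) (C (n - 1 - m) (f * g))
      = (∑ j ∈ Finset.range (n - m), sc m • (perp (X m) (C j f) * C (n - 1 - m - j) g))
        + (∑ j ∈ Finset.range (n - m), sc m • (C j f * perp (X m) (C (n - 1 - m - j) g))) := by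
    intro m hm
    have hmn : m < n := Finset.mem_range.1 hm
    rw [IH (n - 1 - m) (by omega) f g, show n - 1 - m + 1 = n - m by omega,
      perp_sum_right, Finset.smul_sum, ← Finset.sum_add_distrib]
    refine Finset.sum_congr rfl (fun j hj => ?_)
    rw [perp_X_mul, smul_add]
  rw [Finset.sum_congr rfl step1, Finset.sum_add_distrib]
  have rhs1 : ∀ k ∈ Finset.range (n + 1),
      (n : ℚ) • (C k f * C (n - k) g)
      = (∑ m ∈ Finset.range k, sc m • (perp (X m) (C (k - 1 - m) f) * C (n - k) g))
        + (∑ m ∈ Finset.range (n - k), sc m • (C k f * perp (X m) (C (n - k - 1 - m) g))) := by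
    intro k hk
    have hkn : k ≤ n := by
      have := Finset.mem_range.1 hk
      omega
    have hsplit : (n : ℚ) • (C k f * C (n - k) g)
        = ((k : ℚ) • C k f) * C (n - k) g + C k f * (((n - k : ℕ) : ℚ) • C (n - k) g) := by
      rw [smul_mul_assoc, mul_smul_comm, ← add_smul]
      congr 1
      rw [Nat.cast_sub hkn]
      ring
    rw [hsplit, hrec k f, hrec (n - k) g, Finset.sum_mul, Finset.mul_sum]
    congr 1
    · exact Finset.sum_congr rfl (fun m _ => smul_mul_assoc _ _ _)
    · exact Finset.sum_congr rfl (fun m _ => mul_smul_comm _ _ _)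
  rw [Finset.smul_sum, Finset.sum_congr rfl rhs1, Finset.sum_add_distrib]
  congr 1
  · rw [tri n (fun m j => sc m • (perp (X m) (C j f) * C (n - 1 - m - j) g))]
    refine Finset.sum_congr rfl (fun k hk => Finset.sum_congr rfl (fun m hm => ?_))
    have hk' : k ≤ n := by
      have := Finset.mem_range.1 hk
      omega
    have hm' : m < k := Finset.mem_range.1 hm
    rw [show n - 1 - m - (k - 1 - m) = n - k by omega]
  · rw [tri2 n (fun m j => sc m • (C j f * perp (X m) (C (n - 1 - m - j) g)))]
    rw [Finset.sum_range_succ (fun k => ∑ m ∈ Finset.range (n - k),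
      sc m • (C k f * perp (X m) (C (n - k - 1 - m) g))) n]
    rw [Nat.sub_self, Finset.range_zero, Finset.sum_empty, add_zero]
    refine Finset.sum_congr rfl (fun j hj => Finset.sum_congr rfl (fun m hm => ?_))
    have hj' : j < n := Finset.mem_range.1 hj
    have hm' : m < n - j := Finset.mem_range.1 hm
    rw [show n - 1 - m - j = n - j - 1 - m by omega]

-- ## Cancellation identity

lemma newton_cancel {m : ℕ} (hm : 1 ≤ m) :
    ∑ k ∈ Finset.range (m + 1), (-1 : ℚ) ^ k • (eΛ k * hΛ (m - k)) = 0 := by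
  have hne : (m : ℚ) ≠ 0 := Nat.cast_ne_zero.2 (by omega)
  suffices key : (m : ℚ) • ∑ k ∈ Finset.range (m + 1), (-1 : ℚ) ^ k • (eΛ k * hΛ (m - k)) = 0 by
    have h1 := congrArg (fun y => (m : ℚ)⁻¹ • y) key
    simp only [inv_smul_smul₀ hne, smul_zero] at h1
    exact h1
  rw [Finset.smul_sum]
  have hsplit : ∀ k ∈ Finset.range (m + 1),
      (m : ℚ) • ((-1 : ℚ) ^ k • (eΛ k * hΛ (m - k)))
      = (∑ i ∈ Finset.range k,
          ((-1 : ℚ) ^ k * (-1 : ℚ) ^ i) • (eΛ (k - 1 - i) * (X i * hΛ (m - k))))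
        + (∑ i ∈ Finset.range (m - k),
          (-1 : ℚ) ^ k • (eΛ k * (X i * hΛ (m - k - 1 - i)))) := by
    intro k hk
    have hkm : k ≤ m := by
      have := Finset.mem_range.1 hk
      omega
    have h1 : (m : ℚ) • ((-1 : ℚ) ^ k • (eΛ k * hΛ (m - k)))
        = (-1 : ℚ) ^ k • ((((k : ℚ) • eΛ k) * hΛ (m - k))
            + eΛ k * (((m - k : ℕ) : ℚ) • hΛ (m - k))) := by
      rw [smul_mul_assoc, mul_smul_comm, ← add_smul, smul_comm]
      congr 2
      rw [Nat.cast_sub hkm]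
      ring
    rw [h1, newton_e k, newton_h (m - k), Finset.sum_mul, Finset.mul_sum, smul_add]
    apply congrArg₂ (· + ·)
    · rw [Finset.smul_sum]
      refine Finset.sum_congr rfl (fun i hi => ?_)
      rw [smul_mul_assoc, smul_smul,
        show X i * eΛ (k - 1 - i) * hΛ (m - k) = eΛ (k - 1 - i) * (X i * hΛ (m - k)) by ring]
    · rw [Finset.smul_sum]
  rw [Finset.sum_congr rfl hsplit, Finset.sum_add_distrib]
  have hAB : ∑ k ∈ Finset.range (m + 1), ∑ i ∈ Finset.range k,
      ((-1 : ℚ) ^ k * (-1 : ℚ) ^ i) • (eΛ (k - 1 - i) * (X i * hΛ (m - k)))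
      = ∑ k ∈ Finset.range (m + 1), ∑ i ∈ Finset.range (m - k),
        -((-1 : ℚ) ^ k • (eΛ k * (X i * hΛ (m - k - 1 - i)))) := by
    rw [Finset.sum_sigma', Finset.sum_sigma']
    refine Finset.sum_nbij' (i := fun p => ⟨p.1 - 1 - p.2, p.2⟩)
      (j := fun q => ⟨q.1 + q.2 + 1, q.2⟩) ?_ ?_ ?_ ?_ ?_
    · intro p hp
      simp only [Finset.mem_sigma, Finset.mem_range] at hp ⊢
      omega
    · intro q hq
      simp only [Finset.mem_sigma, Finset.mem_range] at hq ⊢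
      omega
    · intro p hp
      obtain ⟨a, b⟩ := p
      simp only [Finset.mem_sigma, Finset.mem_range] at hp
      dsimp only
      simp only [Sigma.ext_iff, heq_eq_eq, true_and, eq_self_iff_true, and_true]
      omega
    · intro q hq
      obtain ⟨a, b⟩ := q
      simp only [Finset.mem_sigma, Finset.mem_range] at hq
      dsimp only
      simp only [Sigma.ext_iff, heq_eq_eq, true_and, eq_self_iff_true, and_true]
      omega
    · intro p hp
      obtain ⟨k, i⟩ := p
      simp only [Finset.mem_sigma, Finset.mem_range] at hp
      dsimp only
      have hik : i < k := hp.2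
      have hkm : k < m + 1 := hp.1
      have hsign : (-1 : ℚ) ^ k * (-1 : ℚ) ^ i = -(-1 : ℚ) ^ (k - 1 - i) := by
        rw [← pow_add, show k + i = (k - 1 - i) + (2 * i + 1) by omega, pow_add,
          Odd.neg_one_pow (n := 2 * i + 1) ⟨i, by ring⟩]
        ring
      rw [hsign, show m - (k - 1 - i) - 1 - i = m - k by omega, neg_smul]
  rw [hAB]
  rw [← Finset.sum_add_distrib]
  apply Finset.sum_eq_zero
  intro k _
  rw [← Finset.sum_add_distrib]
  apply Finset.sum_eq_zero
  intro i _
  rw [neg_add_cancel]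

end Aux

open MvPolynomial Finset in
/-- For every `n ≥ 1` and all symmetric functions `f, g`,
`f · h_n^⊥(g) = Σ_{k=0}^n (−1)^k h_{n−k}^⊥(e_k^⊥(f) · g)`. -/
theorem mul_perp_h (n : ℕ) (hn : 1 ≤ n) (f g : SymFn) :
    f * perp (hΛ n) g =
      ∑ k ∈ Finset.range (n + 1),
        (-1 : SymFn) ^ k * perp (hΛ (n - k)) (perp (eΛ k) f * g) := by
  have hrecH : ∀ (N : ℕ) (x : SymFn), (N : ℚ) • perp (hΛ N) x
      = ∑ m ∈ Finset.range N, (fun _ : ℕ => (1 : ℚ)) m • perp (X m) (perp (hΛ (N - 1 - m)) x) := by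
    intro N x
    rw [← perp_smul_left, newton_h N, perp_sum_left]
    refine Finset.sum_congr rfl (fun m _ => ?_)
    rw [perp_mul, one_smul]
  have Hcop : ∀ (N : ℕ) (u v : SymFn), perp (hΛ N) (u * v)
      = ∑ k ∈ Finset.range (N + 1), perp (hΛ k) u * perp (hΛ (N - k)) v :=
    cop (fun N x => perp (hΛ N) x) (fun _ => (1 : ℚ))
      (fun x => by show perp (hΛ 0) x = x; rw [hΛ_zero, perp_one]) hrecH
  have hneg : ∀ (k : ℕ) (y : SymFn), (-1 : SymFn) ^ k * y = (-1 : ℚ) ^ k • y := by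
    intro k y
    rw [show ((-1 : SymFn)) ^ k = MvPolynomial.C ((-1 : ℚ) ^ k) by
        rw [map_pow, map_neg, map_one],
      ← MvPolynomial.smul_eq_C_mul]
  have h2 : ∀ k ∈ Finset.range (n + 1),
      (-1 : SymFn) ^ k * perp (hΛ (n - k)) (perp (eΛ k) f * g)
      = ∑ j ∈ Finset.range (n - k + 1),
          (-1 : ℚ) ^ k • (perp (hΛ j * eΛ k) f * perp (hΛ (n - k - j)) g) := by
    intro k hk
    rw [hneg, Hcop (n - k) (perp (eΛ k) f) g, Finset.smul_sum]
    refine Finset.sum_congr rfl (fun j hj => ?_)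
    rw [← perp_mul]
  rw [Finset.sum_congr rfl h2]
  rw [tri3 n (fun k j => (-1 : ℚ) ^ k • (perp (hΛ j * eΛ k) f * perp (hΛ (n - k - j)) g))]
  have h3 : ∀ i ∈ Finset.range (n + 1),
      ∑ k ∈ Finset.range (n - i + 1),
        (-1 : ℚ) ^ k • (perp (hΛ (n - i - k) * eΛ k) f * perp (hΛ (n - k - (n - i - k))) g)
      = perp (∑ k ∈ Finset.range (n - i + 1), (-1 : ℚ) ^ k • (eΛ k * hΛ (n - i - k))) f
          * perp (hΛ i) g := by
    intro i hi
    have hi' : i ≤ n := by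
      have := Finset.mem_range.1 hi
      omega
    rw [perp_sum_left, Finset.sum_mul]
    refine Finset.sum_congr rfl (fun k hk => ?_)
    have hk' : k ≤ n - i := by
      have := Finset.mem_range.1 hk
      omega
    rw [show n - k - (n - i - k) = i by omega, perp_smul_left, mul_comm (eΛ k),
      smul_mul_assoc]
  rw [Finset.sum_congr rfl h3]
  rw [Finset.sum_range_succ]
  have h4 : ∀ i ∈ Finset.range n,
      perp (∑ k ∈ Finset.range (n - i + 1), (-1 : ℚ) ^ k • (eΛ k * hΛ (n - i - k))) f
        * perp (hΛ i) g = 0 := by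
    intro i hi
    have hi' : i < n := Finset.mem_range.1 hi
    rw [newton_cancel (m := n - i) (by omega), perp_zero_left, zero_mul]
  rw [Finset.sum_congr rfl h4, Finset.sum_const, smul_zero, zero_add]
  simp [eΛ_zero, hΛ_zero, perp_one]
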